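/- The fraction field F_n is generated as a field extension of ℂ by the set {Δ_{n;k}/Δ'_{n;n−k} : 1 ≤ k ≤ n−1} ∪ {Δ_n} ∪ {x_{ij} : 2 ≤ i ≤ n, 1 ≤ j ≤ n}; that is, the subfield of F_n generated by these n + n(n−1) elements (together with ℂ) is all of F_n. -/

import Mathlib

open MvPolynomial

/-- The quadratic Poisson bracket on the polynomial algebra of the matrix affine
Poisson space `M_{m,n}`. -/
noncomputable def pois {m n : ℕ} (f g : MvPolynomial (Fin m × Fin n) ℂ) :
    MvPolynomial (Fin m × Fin n) ℂ :=
  ∑ i : Fin m, ∑ k : Fin m, ∑ j : Fin n, ∑ l : Fin n,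
    (((k : ℤ) - (i : ℤ)).sign + ((l : ℤ) - (j : ℤ)).sign) •
      (X (i, l) * X (k, j) * pderiv (i, j) f * pderiv (k, l) g)

/-- The minor `Δ_{I,J}` (equal to `0` by convention if `|I| ≠ |J|`). -/
noncomputable def Delta {m n : ℕ} (I : Finset (Fin m)) (J : Finset (Fin n)) :
    MvPolynomial (Fin m × Fin n) ℂ :=
  if h : J.card = I.card then
    Matrix.det (Matrix.of fun a b : Fin I.card =>
      X ((I.orderIsoOfFin rfl a).1, (J.orderIsoOfFin h b).1))
  else 0

/-- The coordinate ring `R_n = ℂ[x_{ij}]` of `M_n`. -/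
abbrev Rn (n : ℕ) := MvPolynomial (Fin n × Fin n) ℂ

/-- The field of rational functions `F_n = ℂ(M_n)`. -/
abbrev Fn (n : ℕ) := FractionRing (Rn n)

/-- The interval `[a,b]` (in 1-based indexing) inside `{1,…,n}`, as a finset of `Fin n`. -/
def iv (n a b : ℕ) : Finset (Fin n) :=
  Finset.univ.filter fun i => a ≤ (i : ℕ) + 1 ∧ (i : ℕ) + 1 ≤ b

/-- `Δ_{l;k}`: the upper-right `k×k` minor of the principal `l×l` submatrix. -/
noncomputable def Dul (n l k : ℕ) : Rn n := Delta (iv n 1 k) (iv n (l - k + 1) l)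

/-- `Δ'_{l;k}`: the lower-left `k×k` minor of the principal `l×l` submatrix. -/
noncomputable def Dll (n l k : ℕ) : Rn n := Delta (iv n (l - k + 1) l) (iv n 1 k)

/-- `Δ_l`: the principal `l×l` minor. -/
noncomputable def Dpr (n l : ℕ) : Rn n := Delta (iv n 1 l) (iv n 1 l)

/-- The extension of the quadratic Poisson bracket to the field of rational functions,
determined by `{P/Q, S/T} = ({P,S}QT − {P,T}QS − {Q,S}PT + {Q,T}PS)/(Q²T²)`. -/
noncomputable def poisF (n : ℕ) (f g : Fn n) : Fn n :=
  let φ := algebraMap (Rn n) (Fn n)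
  let P := (IsLocalization.sec (nonZeroDivisors (Rn n)) f).1
  let Q := ((IsLocalization.sec (nonZeroDivisors (Rn n)) f).2 : Rn n)
  let S := (IsLocalization.sec (nonZeroDivisors (Rn n)) g).1
  let T := ((IsLocalization.sec (nonZeroDivisors (Rn n)) g).2 : Rn n)
  (φ (pois P S) * φ Q * φ T - φ (pois P T) * φ Q * φ S
    - φ (pois Q S) * φ P * φ T + φ (pois Q T) * φ P * φ S)
    / (φ Q ^ 2 * φ T ^ 2)

/-! ### Auxiliary lemmas -/

lemma iv_eq (n a b : ℕ) (ha : 1 ≤ a) (hb : b ≤ n) :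
    iv n a b = Finset.map ⟨fun t : Fin (b + 1 - a) => (⟨a - 1 + t, by omega⟩ : Fin n),
      fun s t hst => by simpa [Fin.ext_iff] using hst⟩ Finset.univ := by
  ext i
  simp only [iv, Finset.mem_filter, Finset.mem_univ, true_and, Finset.mem_map,
    Function.Embedding.coeFn_mk, Fin.ext_iff]
  constructor
  · rintro ⟨h1, h2⟩
    exact ⟨⟨(i : ℕ) + 1 - a, by omega⟩, by show a - 1 + ((i : ℕ) + 1 - a) = (i : ℕ); omega⟩
  · rintro ⟨t, ht⟩
    have := t.2
    have ht' : a - 1 + (t : ℕ) = (i : ℕ) := ht; omega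

lemma iv_card (n a b : ℕ) (ha : 1 ≤ a) (hb : b ≤ n) : (iv n a b).card = b + 1 - a := by
  rw [iv_eq n a b ha hb, Finset.card_map, Finset.card_univ, Fintype.card_fin]

lemma iv_enum (n a b m : ℕ) (ha : 1 ≤ a) (hb : b ≤ n) (h : (iv n a b).card = m) (t : Fin m) :
    (((iv n a b).orderIsoOfFin h t : Fin n) : ℕ) = a - 1 + t := by
  have hm : m = b + 1 - a := by rw [← h, iv_card n a b ha hb]
  subst hm
  have key := Finset.orderEmbOfFin_unique' h
    (f := OrderEmbedding.ofStrictMono (fun t : Fin (b+1-a) => (⟨a - 1 + t, by omega⟩ : Fin n))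
      (fun s t hst => by simp only [Fin.lt_def] at hst ⊢; omega))
    (fun t => by
      simp only [iv, OrderEmbedding.coe_ofStrictMono, Finset.mem_filter, Finset.mem_univ, true_and]
      have := t.2
      exact (show a ≤ (a - 1 + (t : ℕ)) + 1 ∧ a - 1 + (t : ℕ) + 1 ≤ b from ⟨by omega, by omega⟩))
  rw [Finset.coe_orderIsoOfFin_apply, ← key]
  rfl

lemma det_ne {n m : ℕ} (r c : Fin m → Fin n) (hr : Function.Injective r)
    (hc : Function.Injective c) :
    (Matrix.of fun a b : Fin m => X (r a, c b) : Matrix _ _ (Rn n)).det ≠ 0 := by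
  classical
  intro h0
  set σ : Fin n × Fin n → ℂ := fun p => if ∃ a, r a = p.1 ∧ c a = p.2 then (1:ℂ) else 0 with hσ
  have h1 := congrArg (eval σ) h0
  rw [map_zero, RingHom.map_det] at h1
  have h2 : (eval σ).mapMatrix (Matrix.of fun a b : Fin m => X (r a, c b)) = 1 := by
    ext a b
    simp only [RingHom.mapMatrix_apply, Matrix.map_apply, Matrix.of_apply, eval_X,
      Matrix.one_apply, hσ]
    by_cases hab : a = b
    · subst hab; rw [if_pos rfl, if_pos (⟨a, rfl, rfl⟩ : ∃ a', r a' = r a ∧ c a' = c a)]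
    · rw [if_neg hab, if_neg]
      rintro ⟨a', ha1, ha2⟩
      exact hab ((hr ha1).symm.trans (hc ha2))
  rw [h2, Matrix.det_one] at h1
  exact one_ne_zero h1

lemma det_mem {n m : ℕ} (K : IntermediateField ℂ (Fn n))
    (hK : ∀ (i j : Fin n), 1 ≤ (i : ℕ) → algebraMap (Rn n) (Fn n) (X (i, j)) ∈ K)
    (r c : Fin m → Fin n) (hr : ∀ a, 1 ≤ (r a : ℕ)) :
    algebraMap (Rn n) (Fn n) (Matrix.of fun a b : Fin m => X (r a, c b)).det ∈ K := by
  set M' : Matrix (Fin m) (Fin m) K := fun a b => ⟨_, hK (r a) (c b) (hr a)⟩ with hM'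
  have h1 : (algebraMap (Rn n) (Fn n)).mapMatrix
      (Matrix.of fun a b : Fin m => X (r a, c b)) = (K.val.toRingHom).mapMatrix M' := by
    ext a b; rfl
  rw [RingHom.map_det, h1, ← RingHom.map_det]
  exact SetLike.coe_mem _

lemma Delta_iv_eq (n a b a' b' : ℕ) (ha : 1 ≤ a) (hb : b ≤ n) (ha' : 1 ≤ a') (hb' : b' ≤ n)
    (hc : b + 1 - a = b' + 1 - a') :
    Delta (iv n a b) (iv n a' b') = Matrix.det (Matrix.of fun s t : Fin (b + 1 - a) =>
      X ((⟨a - 1 + s, by have := s.2; omega⟩ : Fin n),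
         (⟨a' - 1 + t, by have := t.2; omega⟩ : Fin n))) := by
  have hI : (iv n a b).card = b + 1 - a := iv_card n a b ha hb
  have hJ : (iv n a' b').card = (iv n a b).card := by
    rw [iv_card n a' b' ha' hb', hI, hc]
  rw [Delta, dif_pos hJ, ← Matrix.det_reindex_self (finCongr hI)]
  congr 1
  refine Matrix.ext fun s t => ?_
  simp only [Matrix.reindex_apply, Matrix.submatrix_apply, Matrix.of_apply]
  apply congrArg X
  refine Prod.ext ?_ ?_ <;> refine Fin.ext ?_
  · rw [iv_enum n a b _ ha hb rfl]; rfl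
  · rw [iv_enum n a' b' _ ha' hb' hJ]; rfl

lemma Dul_eq (n k : ℕ) (hk1 : 1 ≤ k) (hkn : k ≤ n) :
    Dul n n k = Matrix.det (Matrix.of fun s t : Fin k =>
      X ((⟨(s : ℕ), by have := s.2; omega⟩ : Fin n),
         (⟨n - k + t, by have := t.2; omega⟩ : Fin n))) := by
  rw [Dul, Delta_iv_eq n 1 k (n - k + 1) n le_rfl hkn (by omega) le_rfl (by omega)]
  refine congrArg Matrix.det (Matrix.ext fun s t =>
    congrArg X (Prod.ext (Fin.ext ?_) (Fin.ext ?_)))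
  · show 1 - 1 + (s : ℕ) = (s : ℕ); omega
  · show n - k + 1 - 1 + (t : ℕ) = n - k + (t : ℕ); omega

set_option maxHeartbeats 1000000 in
set_option synthInstance.maxHeartbeats 400000 in
/-- **Generation of `ℂ(Mₙ)`:** the field `Fₙ` is generated over `ℂ` by the ratios
`Δ_{n;k}/Δ'_{n;n−k}` (`1 ≤ k ≤ n−1`), the determinant `Δₙ`, and the variables
`x_{ij}` with `2 ≤ i ≤ n`, `1 ≤ j ≤ n`. -/
theorem Fn_generated_by_center_and_lower_rows (n : ℕ) (hn : 0 < n) :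
    IntermediateField.adjoin ℂ
        (({algebraMap (Rn n) (Fn n) (Dpr n n)} ∪
          {g : Fn n | ∃ k, 1 ≤ k ∧ k ≤ n - 1 ∧
            g = algebraMap (Rn n) (Fn n) (Dul n n k) /
                algebraMap (Rn n) (Fn n) (Dll n n (n - k))} ∪
          {g : Fn n | ∃ i j : Fin n, 1 ≤ (i : ℕ) ∧
            g = algebraMap (Rn n) (Fn n) (X (i, j))}) : Set (Fn n)) = ⊤ := by
  set φ := algebraMap (Rn n) (Fn n) with hφ
  have hφinj : Function.Injective φ := IsFractionRing.injective (Rn n) (Fn n)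
  set S : Set (Fn n) := ({φ (Dpr n n)} ∪
          {g : Fn n | ∃ k, 1 ≤ k ∧ k ≤ n - 1 ∧
            g = φ (Dul n n k) / φ (Dll n n (n - k))} ∪
          {g : Fn n | ∃ i j : Fin n, 1 ≤ (i : ℕ) ∧ g = φ (X (i, j))}) with hS
  set K := IntermediateField.adjoin ℂ S with hK
  -- low-row variables belong to K
  have hXlow : ∀ (i j : Fin n), 1 ≤ (i : ℕ) → φ (X (i, j)) ∈ K :=
    fun i j hi => IntermediateField.subset_adjoin ℂ S (Or.inr ⟨i, j, hi, rfl⟩)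
  -- the upper-right minors belong to K
  have hDul : ∀ k, 1 ≤ k → k ≤ n → φ (Dul n n k) ∈ K := by
    intro k hk1 hkn
    rcases eq_or_lt_of_le hkn with rfl | hlt
    · have : Dul k k k = Dpr k k := by rw [Dul, Dpr, Nat.sub_self]
      rw [this]
      exact IntermediateField.subset_adjoin ℂ S (Or.inl (Or.inl rfl))
    · have hg : φ (Dul n n k) / φ (Dll n n (n - k)) ∈ K :=
        IntermediateField.subset_adjoin ℂ S (Or.inl (Or.inr ⟨k, hk1, by omega, rfl⟩))
      have eD := Delta_iv_eq n (n - (n - k) + 1) n 1 (n - k) (by omega) le_rfl le_rfl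
        (by omega) (by omega)
      have hDllmem : φ (Dll n n (n - k)) ∈ K := by
        rw [Dll, eD]
        exact det_mem K hXlow _ _
          (fun s => by show 1 ≤ n - (n - k) + 1 - 1 + (s : ℕ); omega)
      have hDllne : φ (Dll n n (n - k)) ≠ 0 := by
        rw [Dll, map_ne_zero_iff φ hφinj, eD]
        exact det_ne _ _ (fun s t hst => by
            simp only [Fin.mk.injEq] at hst; exact Fin.ext (by omega))
          (fun s t hst => by
            simp only [Fin.mk.injEq] at hst; exact Fin.ext (by omega))
      have : φ (Dul n n k) = (φ (Dul n n k) / φ (Dll n n (n - k))) * φ (Dll n n (n - k)) :=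
        (div_mul_cancel₀ _ hDllne).symm
      rw [this]
      exact K.mul_mem hg hDllmem
  -- main induction: row-0 variables belong to K
  have main : ∀ k : ℕ, k ≤ n → ∀ j : Fin n, n - k ≤ (j : ℕ) →
      φ (X ((⟨0, hn⟩ : Fin n), j)) ∈ K := by
    intro k
    induction k using Nat.strong_induction_on with
    | _ k IH =>
      intro hkn j hj
      rcases Nat.eq_zero_or_pos k with rfl | hk1
      · exfalso; have := j.2; omega
      by_cases hjk : n - k < (j : ℕ)
      · exact IH (k - 1) (by omega) (by omega) j (by omega)
      have hjeq : (j : ℕ) = n - k := by omega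
      obtain ⟨m, rfl⟩ : ∃ m, k = m + 1 := ⟨k - 1, by omega⟩
      set N : Matrix (Fin (m+1)) (Fin (m+1)) (Rn n) := Matrix.of fun s t : Fin (m+1) =>
        X ((⟨(s : ℕ), by have := s.2; omega⟩ : Fin n),
           (⟨n - (m+1) + t, by have := t.2; omega⟩ : Fin n)) with hN
      have e0 : Dul n n (m+1) = N 0 0 * (N.submatrix Fin.succ (Fin.succAbove 0)).det
          + ∑ t : Fin m, (-1 : Rn n) ^ ((t.succ : Fin (m+1)) : ℕ) * N 0 t.succ
              * (N.submatrix Fin.succ t.succ.succAbove).det := by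
        rw [Dul_eq n (m+1) (by omega) hkn, ← hN, Matrix.det_succ_row_zero, Fin.sum_univ_succ]
        simp
      have hC0mem : φ (N.submatrix Fin.succ (Fin.succAbove 0)).det ∈ K := by
        have : N.submatrix Fin.succ (Fin.succAbove 0) = Matrix.of fun a b : Fin m =>
            X ((⟨(a : ℕ) + 1, by have := a.2; omega⟩ : Fin n),
               (⟨n - (m+1) + ((Fin.succAbove 0 b : Fin (m+1)) : ℕ), by
                  have := (Fin.succAbove (0 : Fin (m+1)) b).2; omega⟩ : Fin n)) := by
          refine Matrix.ext fun a b => ?_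
          apply congrArg X
          exact Prod.ext (Fin.ext (by simp)) (Fin.ext (by simp))
        rw [this]
        exact det_mem K hXlow _ _ (fun a => by simp)
      have hC0ne : φ (N.submatrix Fin.succ (Fin.succAbove 0)).det ≠ 0 := by
        rw [map_ne_zero_iff φ hφinj]
        have : N.submatrix Fin.succ (Fin.succAbove 0) = Matrix.of fun a b : Fin m =>
            X ((⟨(a : ℕ) + 1, by have := a.2; omega⟩ : Fin n),
               (⟨n - (m+1) + (b : ℕ) + 1, by have := b.2; omega⟩ : Fin n)) := by
          refine Matrix.ext fun a b => ?_
          apply congrArg X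
          refine Prod.ext (Fin.ext (by simp)) (Fin.ext ?_)
          simp [Fin.zero_succAbove]
          omega
        rw [this]
        exact det_ne _ _
          (fun s t hst => by simp only [Fin.mk.injEq] at hst; exact Fin.ext (by omega))
          (fun s t hst => by simp only [Fin.mk.injEq] at hst; exact Fin.ext (by omega))
      have hsum : ∀ t : Fin m, φ ((-1 : Rn n) ^ ((t.succ : Fin (m+1)) : ℕ) * N 0 t.succ
          * (N.submatrix Fin.succ t.succ.succAbove).det) ∈ K := by
        intro t
        rw [map_mul, map_mul]
        refine K.mul_mem (K.mul_mem ?_ ?_) ?_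
        · rw [map_pow, map_neg, map_one]
          exact pow_mem (K.neg_mem K.one_mem) _
        · have : N 0 t.succ = X ((⟨0, hn⟩ : Fin n),
              (⟨n - (m+1) + (t : ℕ) + 1, by have := t.2; omega⟩ : Fin n)) := by
            apply congrArg X
            refine Prod.ext (Fin.ext (by simp)) (Fin.ext ?_)
            simp
            omega
          rw [this]
          exact IH m (by omega) (by omega) _ (by simp; omega)
        · have : N.submatrix Fin.succ t.succ.succAbove = Matrix.of fun a b : Fin m =>
              X ((⟨(a : ℕ) + 1, by have := a.2; omega⟩ : Fin n),
                 (⟨n - (m+1) + ((t.succ.succAbove b : Fin (m+1)) : ℕ), by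
                    have := (Fin.succAbove t.succ b).2; omega⟩ : Fin n)) := by
            refine Matrix.ext fun a b => ?_
            apply congrArg X
            exact Prod.ext (Fin.ext (by simp)) (Fin.ext (by simp))
          rw [this]
          exact det_mem K hXlow _ _ (fun a => by simp)
      have hx : φ (N 0 0) * φ (N.submatrix Fin.succ (Fin.succAbove 0)).det ∈ K := by
        have := congrArg φ e0
        rw [map_add, map_mul, map_sum φ _ _] at this
        have e2 : φ (N 0 0) * φ (N.submatrix Fin.succ (Fin.succAbove 0)).det
            = φ (Dul n n (m+1)) - ∑ t : Fin m, φ ((-1 : Rn n) ^ ((t.succ : Fin (m+1)) : ℕ)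
                * N 0 t.succ * (N.submatrix Fin.succ t.succ.succAbove).det) := by
          rw [this]; ring
        rw [e2]
        exact K.sub_mem (hDul (m+1) (by omega) hkn) (K.sum_mem (fun t _ => hsum t))
      have eN00 : N 0 0 = X ((⟨0, hn⟩ : Fin n), j) := by
        apply congrArg X
        refine Prod.ext (Fin.ext (by simp)) (Fin.ext ?_)
        simp
        omega
      have : φ (X ((⟨0, hn⟩ : Fin n), j)) = (φ (N 0 0)
            * φ (N.submatrix Fin.succ (Fin.succAbove 0)).det)
          * (φ (N.submatrix Fin.succ (Fin.succAbove 0)).det)⁻¹ := by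
        rw [mul_assoc, mul_inv_cancel₀ hC0ne, mul_one, eN00]
      rw [this]
      exact K.mul_mem hx (K.inv_mem hC0mem)
  -- all variables belong to K
  have hXall : ∀ p : Fin n × Fin n, φ (X p) ∈ K := by
    rintro ⟨i, j⟩
    by_cases hi : 1 ≤ (i : ℕ)
    · exact hXlow i j hi
    · have : i = (⟨0, hn⟩ : Fin n) := Fin.ext (by show (i : ℕ) = 0; omega)
      rw [this]
      refine main n le_rfl j ?_
      omega
  -- every polynomial maps into K
  have hR : ∀ P : Rn n, φ P ∈ K := by
    intro P
    induction P using MvPolynomial.induction_on with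
    | C a =>
      have : φ (MvPolynomial.C a) = algebraMap ℂ (Fn n) a := by
        rw [← MvPolynomial.algebraMap_eq, ← IsScalarTower.algebraMap_apply]
      rw [this]
      exact K.algebraMap_mem a
    | add p q hp hq => rw [map_add]; exact K.add_mem hp hq
    | mul_X p i hp => rw [map_mul]; exact K.mul_mem hp (hXall i)
  refine eq_top_iff.mpr fun x _ => ?_
  obtain ⟨P, Q, -, rfl⟩ := IsFractionRing.div_surjective (A := Rn n) x
  exact K.div_mem (hR P) (hR Q)
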